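/- arXiv:1011.4833 — 2 statements merged into one kernel-verified Lean document; each statement's English description precedes it below -/
import Mathlib

section
/- For all formulas F, G, H, the following HT-equivalences hold: F ∧ (G × H) is HT-equivalent to (F ∧ G) × (F ∧ H); (F × G) ∧ H is HT-equivalent to (F ∧ H) × (G ∧ H); and F × (G ∧ H) is HT-equivalent to (F × G) ∧ (F × H). -/
inductive Form (α : Type) : Type
  | atom : α → Form α
  | fls  : Form α
  | and  : Form α → Form α → Form α
  | or   : Form α → Form α → Form α
  | imp  : Form α → Form α → Form α

namespace Form

variable {α : Type}

/-- ¬F abbreviates F → ⊥ -/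
def neg (F : Form α) : Form α := imp F fls

/-- ⊤ abbreviates ⊥ → ⊥ -/
def tru : Form α := imp fls fls

/-- ordered disjunction F × G := F ∨ (¬F ∧ G) -/
def ox (F G : Form α) : Form α := or F (and (neg F) G)

/-- classical satisfaction -/
def csat (T : Set α) : Form α → Prop
  | atom p  => p ∈ T
  | fls     => False
  | and F G => csat T F ∧ csat T G
  | or F G  => csat T F ∨ csat T G
  | imp F G => csat T F → csat T G

/-- here-and-there satisfaction (for interpretations ⟨H,T⟩ with H ⊆ T) -/
def htsat (H T : Set α) : Form α → Prop
  | atom p  => p ∈ H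
  | fls     => False
  | and F G => htsat H T F ∧ htsat H T G
  | or F G  => htsat H T F ∨ htsat H T G
  | imp F G => (csat T F → csat T G) ∧ (¬ htsat H T F ∨ htsat H T G)

end Form

/-- HT-equivalence: satisfied by exactly the same HT-interpretations -/
def HTEquiv {α : Type} (F G : Form α) : Prop :=
  ∀ H T : Set α, H ⊆ T → (Form.htsat H T F ↔ Form.htsat H T G)

/-- ⟨T,T⟩ is an equilibrium model of the theory Γ -/
def EqModel {α : Type} (Γ : Set (Form α)) (T : Set α) : Prop :=
  (∀ F ∈ Γ, Form.htsat T T F) ∧ ∀ H : Set α, H ⊂ T → ¬ (∀ F ∈ Γ, Form.htsat H T F)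

/-- iterated ordered disjunction, associated to the left; ⊥ when empty -/
def oxList {α : Type} : List (Form α) → Form α
  | []      => Form.fls
  | a :: as => as.foldl Form.ox a

/-- iterated disjunction, associated to the left; ⊥ when empty -/
def orList {α : Type} : List (Form α) → Form α
  | []      => Form.fls
  | a :: as => as.foldl Form.or a

/-- iterated conjunction, associated to the left; ⊤ when empty -/
def andList {α : Type} : List (Form α) → Form α
  | []      => Form.tru
  | a :: as => as.foldl Form.and a


lemma htsat_csat {α : Type} {H T : Set α} (hs : H ⊆ T) :
    ∀ F : Form α, Form.htsat H T F → Form.csat T F := by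
  intro F
  induction F with
  | atom p => exact fun h => hs h
  | fls => exact id
  | and F G ihF ihG => exact fun ⟨a,b⟩ => ⟨ihF a, ihG b⟩
  | or F G ihF ihG => exact fun h => h.elim (fun a => Or.inl (ihF a)) (fun b => Or.inr (ihG b))
  | imp F G ihF ihG => exact fun h => h.1

theorem ox_and_distributivity {α : Type} (F G K : Form α) :
    HTEquiv (Form.and F (Form.ox G K)) (Form.ox (Form.and F G) (Form.and F K)) ∧
    HTEquiv (Form.and (Form.ox F G) K) (Form.ox (Form.and F K) (Form.and G K)) ∧
    HTEquiv (Form.ox F (Form.and G K)) (Form.and (Form.ox F G) (Form.ox F K)) := by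
  refine ⟨?_, ?_, ?_⟩ <;> intro H T hs <;>
    have hF := htsat_csat hs F <;> have hG := htsat_csat hs G <;> have hK := htsat_csat hs K <;>
    simp only [Form.ox, Form.neg, Form.htsat, Form.csat] <;> tauto
end

section
/- For any LPOD P, the theory consisting of the formulas (×A) ← (∧B) ∧ (∧¬B') for each rule of P is HT-equivalent to the theory P*: every HT-interpretation satisfies all rules of P (read with × as the derived operator) if and only if it satisfies all rules of P*. -/
/-- A rule of a logic program with ordered disjunction:
    (×A) ← (∧B) ∧ (∧¬B') with A, B, B' lists of atoms. -/
structure LPODRule (α : Type) where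
  A  : List α
  B  : List α
  B' : List α

namespace LPODRule

variable {α : Type}

def negAtom (a : α) : Form α := Form.neg (Form.atom a)

/-- the body (∧B) ∧ (∧¬B') of a rule -/
def body (r : LPODRule α) : Form α :=
  Form.and (andList (r.B.map Form.atom)) (andList (r.B'.map negAtom))

/-- the rule as the HT formula (×A) ← (∧B) ∧ (∧¬B') -/
def form (r : LPODRule α) : Form α :=
  Form.imp r.body (oxList (r.A.map Form.atom))

/-- the rule read classically: (∨A) ← (∧B) ∧ (∧¬B') -/
def clForm (r : LPODRule α) : Form α :=
  Form.imp r.body (orList (r.A.map Form.atom))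

/-- the translation r*: the rules
    A[i] ∨ ¬A[i] ← (∧B) ∧ (∧¬B') ∧ (∧¬A[1..i−1]) for i = 1..|A|,
    plus the constraint ⊥ ← (∧B) ∧ (∧¬B') ∧ (∧¬A). -/
def star (r : LPODRule α) : List (Form α) :=
  ((List.range r.A.length).attach.map (fun i =>
    Form.imp
      (Form.and r.body (andList ((r.A.take i.1).map negAtom)))
      (Form.or (Form.atom (r.A.get ⟨i.1, List.mem_range.mp i.2⟩))
               (Form.neg (Form.atom (r.A.get ⟨i.1, List.mem_range.mp i.2⟩)))))) ++
  [Form.imp (Form.and r.body (andList (r.A.map negAtom))) Form.fls]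

end LPODRule

section Aux

open Form

variable {α : Type} {H T : Set α}

lemma persist (hsub : H ⊆ T) : ∀ F : Form α, htsat H T F → csat T F
  | .atom _, h => hsub h
  | .fls, h => h
  | .and F G, h => ⟨persist hsub F h.1, persist hsub G h.2⟩
  | .or F G, h => h.elim (fun h => Or.inl (persist hsub F h))
      (fun h => Or.inr (persist hsub G h))
  | .imp _ _, h => h.1

lemma htsat_neg_iff (hsub : H ⊆ T) (F : Form α) :
    htsat H T F.neg ↔ ¬ csat T F := by
  simp only [Form.neg, htsat, csat]
  constructor
  · rintro ⟨h1, _⟩ hc; exact h1 hc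
  · intro h; exact ⟨fun hc => h hc, Or.inl fun hh => h (persist hsub F hh)⟩

lemma csat_neg_iff (F : Form α) : csat T F.neg ↔ ¬ csat T F := Iff.rfl

lemma htsat_tru : htsat H T (tru : Form α) := ⟨id, Or.inl fun h => h⟩

lemma htsat_imp_iff (F G : Form α) : htsat H T (Form.imp F G) ↔
    (csat T F → csat T G) ∧ (¬ htsat H T F ∨ htsat H T G) := Iff.rfl

lemma htsat_and_iff (F G : Form α) : htsat H T (Form.and F G) ↔
    htsat H T F ∧ htsat H T G := Iff.rfl

lemma htsat_or_iff (F G : Form α) : htsat H T (Form.or F G) ↔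
    htsat H T F ∨ htsat H T G := Iff.rfl

lemma csat_and_iff (F G : Form α) : csat T (Form.and F G) ↔
    csat T F ∧ csat T G := Iff.rfl

lemma csat_fls_iff : csat T (Form.fls : Form α) ↔ False := Iff.rfl

lemma htsat_fls_iff : htsat H T (Form.fls : Form α) ↔ False := Iff.rfl

lemma htsat_atom_iff (a : α) : htsat H T (Form.atom a) ↔ a ∈ H := Iff.rfl

lemma csat_atom_iff (a : α) : csat T (Form.atom a) ↔ a ∈ T := Iff.rfl

lemma htsat_foldl_and (l : List (Form α)) (acc : Form α) :
    htsat H T (l.foldl Form.and acc) ↔ htsat H T acc ∧ ∀ F ∈ l, htsat H T F := by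
  induction l generalizing acc with
  | nil => simp
  | cons x xs ih =>
    rw [List.foldl_cons, ih, htsat_and_iff]
    constructor
    · rintro ⟨⟨ha, hx⟩, hxs⟩
      exact ⟨ha, fun F hF => (List.mem_cons.mp hF).elim (fun h => h ▸ hx) (hxs F)⟩
    · rintro ⟨ha, h⟩
      exact ⟨⟨ha, h x List.mem_cons_self⟩, fun F hF => h F (List.mem_cons_of_mem x hF)⟩

lemma csat_foldl_and (l : List (Form α)) (acc : Form α) :
    csat T (l.foldl Form.and acc) ↔ csat T acc ∧ ∀ F ∈ l, csat T F := by
  induction l generalizing acc with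
  | nil => simp
  | cons x xs ih =>
    rw [List.foldl_cons, ih, csat_and_iff]
    constructor
    · rintro ⟨⟨ha, hx⟩, hxs⟩
      exact ⟨ha, fun F hF => (List.mem_cons.mp hF).elim (fun h => h ▸ hx) (hxs F)⟩
    · rintro ⟨ha, h⟩
      exact ⟨⟨ha, h x List.mem_cons_self⟩, fun F hF => h F (List.mem_cons_of_mem x hF)⟩

lemma htsat_andList_negAtom (hsub : H ⊆ T) (l : List α) :
    htsat H T (andList (l.map LPODRule.negAtom)) ↔ ∀ a ∈ l, a ∉ T := by
  cases l with
  | nil => simpa [andList] using htsat_tru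
  | cons x xs =>
    simp [andList, htsat_foldl_and, LPODRule.negAtom, htsat_neg_iff hsub, csat]

lemma csat_andList_negAtom (l : List α) :
    csat T (andList (l.map LPODRule.negAtom)) ↔ ∀ a ∈ l, a ∉ T := by
  cases l with
  | nil => simp [andList, tru, csat]
  | cons x xs =>
    simp [andList, csat_foldl_and, LPODRule.negAtom, csat_neg_iff, csat]

lemma csat_foldl_ox (l : List (Form α)) (acc : Form α) :
    csat T (l.foldl Form.ox acc) ↔ csat T acc ∨ ∃ F ∈ l, csat T F := by
  induction l generalizing acc with
  | nil => simp
  | cons x xs ih =>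
    simp only [List.foldl_cons, ih, ox, Form.neg, csat, List.mem_cons]
    constructor
    · rintro (((h | ⟨_, h⟩) | ⟨F, hF, h⟩))
      · exact Or.inl h
      · exact Or.inr ⟨x, Or.inl rfl, h⟩
      · exact Or.inr ⟨F, Or.inr hF, h⟩
    · rintro (h | ⟨F, (rfl | hF), h⟩)
      · exact Or.inl (Or.inl h)
      · by_cases hacc : csat T acc
        · exact Or.inl (Or.inl hacc)
        · exact Or.inl (Or.inr ⟨fun c => (hacc c).elim, h⟩)
      · exact Or.inr ⟨F, hF, h⟩

lemma csat_oxList (l : List α) :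
    csat T (oxList (l.map Form.atom)) ↔ ∃ a ∈ l, a ∈ T := by
  cases l with
  | nil => simp [oxList, csat]
  | cons x xs => simp [oxList, csat_foldl_ox, csat]

/-- index characterization for a cons list -/
lemma exists_idx_cons (x : α) (xs : List α) (P Q : α → Prop) :
    (∃ i, ∃ hi : i < (x :: xs).length,
        (∀ j, ∀ hj : j < i, Q ((x :: xs).get ⟨j, hj.trans hi⟩)) ∧
        P ((x :: xs).get ⟨i, hi⟩)) ↔
    P x ∨ (Q x ∧ ∃ i, ∃ hi : i < xs.length,
        (∀ j, ∀ hj : j < i, Q (xs.get ⟨j, hj.trans hi⟩)) ∧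
        P (xs.get ⟨i, hi⟩)) := by
  constructor
  · rintro ⟨i, hi, hq, hp⟩
    cases i with
    | zero => exact Or.inl hp
    | succ i =>
      refine Or.inr ⟨hq 0 (Nat.succ_pos i), i, Nat.succ_lt_succ_iff.mp hi,
        fun j hj => hq (j + 1) (Nat.succ_lt_succ hj), hp⟩
  · rintro (hp | ⟨hqx, i, hi, hq, hp⟩)
    · exact ⟨0, Nat.succ_pos _, fun j hj => absurd hj (Nat.not_lt_zero j), hp⟩
    · refine ⟨i + 1, Nat.succ_lt_succ hi, ?_, hp⟩
      intro j hj
      cases j with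
      | zero => exact hqx
      | succ j => exact hq j (Nat.succ_lt_succ_iff.mp hj)

lemma htsat_foldl_ox_atoms (l : List α) (acc : Form α) :
    htsat H T ((l.map Form.atom).foldl Form.ox acc) ↔
      htsat H T acc ∨ (¬ csat T acc ∧ ∃ i, ∃ hi : i < l.length,
        (∀ j, ∀ hj : j < i, l.get ⟨j, hj.trans hi⟩ ∉ T) ∧
        l.get ⟨i, hi⟩ ∈ H) := by
  induction l generalizing acc with
  | nil => simp
  | cons x xs ih =>
    rw [List.map_cons, List.foldl_cons, ih,
      exists_idx_cons x xs (· ∈ H) (· ∉ T)]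
    have h1 : htsat H T (Form.ox acc (Form.atom x)) ↔
        htsat H T acc ∨ (¬ csat T acc ∧ ¬ htsat H T acc ∧ x ∈ H) := by
      simp only [ox, Form.neg, htsat, csat]; tauto
    have h2 : csat T (Form.ox acc (Form.atom x)) ↔ csat T acc ∨ x ∈ T := by
      simp only [ox, Form.neg, csat]; tauto
    rw [h1, h2]
    tauto

lemma htsat_oxList (l : List α) :
    htsat H T (oxList (l.map Form.atom)) ↔
      ∃ i, ∃ hi : i < l.length,
        (∀ j, ∀ hj : j < i, l.get ⟨j, hj.trans hi⟩ ∉ T) ∧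
        l.get ⟨i, hi⟩ ∈ H := by
  cases l with
  | nil => simp [oxList, htsat]
  | cons x xs =>
    rw [List.map_cons]
    show htsat H T ((xs.map Form.atom).foldl Form.ox (Form.atom x)) ↔ _
    rw [htsat_foldl_ox_atoms, exists_idx_cons x xs (· ∈ H) (· ∉ T)]
    simp only [htsat, csat]

lemma take_forall_iff (l : List α) (i : ℕ) (hi : i < l.length) (Q : α → Prop) :
    (∀ a ∈ l.take i, Q a) ↔ ∀ j, ∀ hj : j < i, Q (l.get ⟨j, hj.trans hi⟩) := by
  constructor
  · intro h j hj
    apply h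
    rw [List.mem_take_iff_getElem]
    exact ⟨j, by omega, by simp [List.get_eq_getElem]⟩
  · intro h a ha
    rw [List.mem_take_iff_getElem] at ha
    obtain ⟨j, hj, rfl⟩ := ha
    have hj' : j < i := lt_of_lt_of_le hj (min_le_left _ _)
    have := h j hj'
    simpa [List.get_eq_getElem] using this

lemma rule_equiv (hsub : H ⊆ T) (r : LPODRule α) :
    htsat H T r.form ↔ ∀ F ∈ r.star, htsat H T F := by
  classical
  set b := r.body with hb_def
  -- characterize membership in star
  have hstar : (∀ F ∈ r.star, htsat H T F) ↔
      ((∀ i, ∀ hi : i < r.A.length,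
          htsat H T (Form.imp (Form.and b (andList ((r.A.take i).map LPODRule.negAtom)))
            (Form.or (Form.atom (r.A.get ⟨i, hi⟩))
              (Form.neg (Form.atom (r.A.get ⟨i, hi⟩)))))) ∧
        htsat H T (Form.imp (Form.and b (andList (r.A.map LPODRule.negAtom))) Form.fls)) := by
    constructor
    · intro h
      constructor
      · intro i hi
        exact h _ (List.mem_append_left _
          (List.mem_map.mpr ⟨⟨i, List.mem_range.mpr hi⟩, List.mem_attach _ _, rfl⟩))
      · exact h _ (List.mem_append_right _ (List.mem_singleton_self _))
    · rintro ⟨h1, h2⟩ F hF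
      rcases List.mem_append.mp hF with hF | hF
      · obtain ⟨⟨i, hi⟩, -, rfl⟩ := List.mem_map.mp hF
        exact h1 i (List.mem_range.mp hi)
      · rw [List.mem_singleton.mp hF]
        exact h2
  rw [hstar]
  -- characterize each star rule
  have hrule : ∀ i, ∀ hi : i < r.A.length,
      (htsat H T (Form.imp (Form.and b (andList ((r.A.take i).map LPODRule.negAtom)))
          (Form.or (Form.atom (r.A.get ⟨i, hi⟩))
            (Form.neg (Form.atom (r.A.get ⟨i, hi⟩))))) ↔
        ((htsat H T b ∧ ∀ j, ∀ hj : j < i, r.A.get ⟨j, hj.trans hi⟩ ∉ T) →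
          (r.A.get ⟨i, hi⟩ ∈ H ∨ r.A.get ⟨i, hi⟩ ∉ T))) := by
    intro i hi
    set a := r.A.get ⟨i, hi⟩
    have hhead_c : csat T (Form.or (Form.atom a) (Form.neg (Form.atom a))) := by
      simp only [csat, Form.neg]
      by_cases h : a ∈ T
      · exact Or.inl h
      · exact Or.inr h
    have hhead_h : htsat H T (Form.or (Form.atom a) (Form.neg (Form.atom a))) ↔
        (a ∈ H ∨ a ∉ T) := by
      rw [htsat_or_iff, htsat_neg_iff hsub, htsat_atom_iff, csat_atom_iff]
    have hbody_h : htsat H T (Form.and b (andList ((r.A.take i).map LPODRule.negAtom))) ↔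
        (htsat H T b ∧ ∀ j, ∀ hj : j < i, r.A.get ⟨j, hj.trans hi⟩ ∉ T) := by
      rw [htsat_and_iff, htsat_andList_negAtom hsub]
      exact and_congr_right fun _ => take_forall_iff r.A i hi _
    rw [htsat_imp_iff]
    constructor
    · rintro ⟨_, h⟩ hb
      rcases h with h | h
      · exact absurd (hbody_h.mpr hb) h
      · exact hhead_h.mp h
    · intro h
      refine ⟨fun _ => hhead_c, ?_⟩
      by_cases hb : htsat H T b ∧ ∀ j, ∀ hj : j < i, r.A.get ⟨j, hj.trans hi⟩ ∉ T
      · exact Or.inr (hhead_h.mpr (h hb))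
      · exact Or.inl fun hh => hb (hbody_h.mp hh)
  -- characterize constraint
  have hconstr : htsat H T (Form.imp (Form.and b (andList (r.A.map LPODRule.negAtom))) Form.fls) ↔
      (csat T b → ∃ a ∈ r.A, a ∈ T) := by
    simp only [htsat_imp_iff, htsat_and_iff, csat_and_iff, csat_fls_iff, htsat_fls_iff,
      csat_andList_negAtom, htsat_andList_negAtom hsub, or_false]
    constructor
    · rintro ⟨h1, _⟩ hcb
      by_contra h
      push_neg at h
      exact h1 ⟨hcb, fun a ha => h a ha⟩
    · intro h
      constructor
      · rintro ⟨hcb, hall⟩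
        obtain ⟨a, ha, haT⟩ := h hcb
        exact hall a ha haT
      · rintro ⟨hb2, hall⟩
        obtain ⟨a, ha, haT⟩ := h (persist hsub b hb2)
        exact hall a ha haT
  -- characterize lhs
  have hlhs : htsat H T r.form ↔
      ((csat T b → ∃ a ∈ r.A, a ∈ T) ∧
        (htsat H T b → ∃ i, ∃ hi : i < r.A.length,
          (∀ j, ∀ hj : j < i, r.A.get ⟨j, hj.trans hi⟩ ∉ T) ∧
          r.A.get ⟨i, hi⟩ ∈ H)) := by
    show (htsat H T (Form.imp b (oxList (r.A.map Form.atom)))) ↔ _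
    rw [htsat_imp_iff, csat_oxList, htsat_oxList]
    constructor
    · rintro ⟨h1, h2⟩
      refine ⟨h1, fun hb => ?_⟩
      rcases h2 with h2 | h2
      · exact absurd hb h2
      · exact h2
    · rintro ⟨h1, h2⟩
      refine ⟨h1, ?_⟩
      by_cases hb : htsat H T b
      · exact Or.inr (h2 hb)
      · exact Or.inl hb
  rw [hlhs]
  have hrules_iff : (∀ i, ∀ hi : i < r.A.length,
      htsat H T (Form.imp (Form.and b (andList ((r.A.take i).map LPODRule.negAtom)))
        (Form.or (Form.atom (r.A.get ⟨i, hi⟩))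
          (Form.neg (Form.atom (r.A.get ⟨i, hi⟩)))))) ↔
      (∀ i, ∀ hi : i < r.A.length,
        (htsat H T b ∧ ∀ j, ∀ hj : j < i, r.A.get ⟨j, hj.trans hi⟩ ∉ T) →
        (r.A.get ⟨i, hi⟩ ∈ H ∨ r.A.get ⟨i, hi⟩ ∉ T)) :=
    forall_congr' fun i => forall_congr' fun hi => hrule i hi
  rw [hconstr, hrules_iff]
  -- the propositional core
  constructor
  · rintro ⟨hc, hh⟩
    refine ⟨fun i hi ⟨hb, hprev⟩ => ?_, hc⟩
    obtain ⟨k, hk, hkprev, hkH⟩ := hh hb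
    rcases lt_trichotomy k i with h | h | h
    · exact absurd (hsub hkH) (hprev k h)
    · subst h; exact Or.inl hkH
    · exact Or.inr (hkprev i h)
  · rintro ⟨hrules, hc⟩
    refine ⟨hc, fun hb => ?_⟩
    obtain ⟨a, haA, haT⟩ := hc (persist hsub b hb)
    obtain ⟨m, hm, rfl⟩ := List.mem_iff_get.mp haA
    -- minimal index with A.get ∈ T
    have hex : ∃ k, ∃ hk : k < r.A.length, r.A.get ⟨k, hk⟩ ∈ T := ⟨m, m.2, haT⟩
    classical
    let k := Nat.find hex
    obtain ⟨hk, hkT⟩ : ∃ hk : k < r.A.length, r.A.get ⟨k, hk⟩ ∈ T := Nat.find_spec hex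
    have hprev : ∀ j, ∀ hj : j < k, r.A.get ⟨j, hj.trans hk⟩ ∉ T := by
      intro j hj hjT
      exact Nat.find_min hex hj ⟨hj.trans hk, hjT⟩
    rcases hrules k hk ⟨hb, hprev⟩ with h | h
    · exact ⟨k, hk, hprev, h⟩
    · exact absurd hkT h
  
end Aux

/-- for any LPOD P, P is HT-equivalent to P*. -/
theorem lpod_star_ht_equiv {α : Type} (P : List (LPODRule α))
    (H T : Set α) (hsub : H ⊆ T) :
    (∀ r ∈ P, Form.htsat H T r.form) ↔
    (∀ r ∈ P, ∀ F ∈ r.star, Form.htsat H T F) := by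
  exact forall₂_congr fun r _ => rule_equiv hsub r
end
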